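/- Let r be a power of an odd prime p, q = r², write q − 1 = e·f, and set R = (r+1)/gcd(r+1, f). Suppose t·f is even and 1 ≤ t ≤ R, and suppose that either (A) f is even and 4 divides (t−1)(r+1), or (B) f is odd. Then t·f + 2 belongs to Σ(eg, q). -/

import Mathlib

open Finset

/-- Δ_S(a) = ∏_{b ∈ S, b ≠ a} (a − b). -/
def deltaS {F : Type*} [Field F] [DecidableEq F] (S : Finset F) (a : F) : F :=
  ∏ b ∈ S.erase a, (a - b)

/-- n ∈ Σ(eg,q): n is even, n ≥ 2, and there is S ⊆ F_q with |S| = n − 1 such that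
η_q(−Δ_S(a)) = 1, i.e. −Δ_S(a) is a square, for all a ∈ S. -/
def SigmaEG (F : Type*) [Field F] [DecidableEq F] (n : ℕ) : Prop :=
  Even n ∧ 2 ≤ n ∧ ∃ S : Finset F, S.card = n - 1 ∧
    ∀ a ∈ S, IsSquare (-(deltaS S a))

open Polynomial in
lemma aux_sigma {F : Type*} [Field F] [Fintype F] [DecidableEq F]
    (p m r : ℕ) (hp : p.Prime) (hodd : p ≠ 2) (hm : 0 < m) (hr : r = p ^ m)
    (hF : Fintype.card F = r ^ 2)
    (e f t : ℕ) (hef : r ^ 2 - 1 = e * f) (hf1 : 1 ≤ f) (ht1 : 1 ≤ t)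
    (htf : Even (t * f))
    (nn : Fin t → ℕ)
    (hlt : ∀ i, nn i < r + 1)
    (hinj : Function.Injective nn)
    (hne : ∀ i, (r + 1) ∣ nn i * e)
    (hpar : ∀ i : Fin t,
      Even ((t - 1) * ((r + 1) / 2) + (t - 1) * nn i + ∑ k ∈ Finset.univ.erase i, nn k)) :
    SigmaEG F (t * f + 2) := by
  classical
  have hp3 : 3 ≤ p := by have := hp.two_le; omega
  have hr3 : 3 ≤ r := by
    rw [hr]; calc 3 ≤ p := hp3
    _ ≤ p ^ m := Nat.le_self_pow (by omega) p
  have hrodd : Odd r := by rw [hr]; exact (hp.odd_of_ne_two hodd).pow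
  obtain ⟨k, hk⟩ := hrodd
  have hk1 : 1 ≤ k := by omega
  obtain ⟨c, hc⟩ : ∃ c, k * (k + 1) = c := ⟨_, rfl⟩
  have hrsq : r ^ 2 = 4 * c + 1 := by subst hk; rw [← hc]; ring
  have hc2 : 2 ≤ c := by rw [← hc]; nlinarith
  -- characteristic
  haveI : Fact p.Prime := ⟨hp⟩
  have hrc : ringChar F = p := by
    haveI hcp : CharP F (ringChar F) := ringChar.charP F
    obtain ⟨n', hpc, hcard⟩ := FiniteField.card F (ringChar F)
    have hdvd : ringChar F ∣ p ^ (m * 2) := by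
      have h2 : Fintype.card F = p ^ (m * 2) := by rw [hF, hr, ← pow_mul]
      rw [h2] at hcard
      exact hcard ▸ dvd_pow_self (ringChar F) n'.ne_zero
    exact (Nat.prime_dvd_prime_iff_eq hpc hp).mp (hpc.dvd_of_dvd_pow hdvd)
  haveI hcharF : CharP F p := hrc ▸ ringChar.charP F
  -- Frobenius on natural casts
  have hfrob0 : ∀ (j : ℕ) (x : ℕ), (x : F) ^ p ^ j = (x : F) := by
    intro j x
    induction j with
    | zero => simp
    | succ j ih =>
      rw [pow_succ, pow_mul, ih]
      have hfx := map_natCast (frobenius F p) x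
      rwa [frobenius_def] at hfx
  have hfrob : ∀ x : ℕ, (x : F) ^ r = (x : F) := by
    intro x; rw [hr]; exact hfrob0 m x
  -- M
  set M := 2 * c with hM
  have hMcard : Fintype.card F / 2 = M := by rw [hF, hrsq]; omega
  have hMeven : Even M := ⟨c, by omega⟩
  have hβ : (r + 1) / 2 = k + 1 := by omega
  have hrM : r * (k + 1) = M + (k + 1) := by
    subst hk; rw [hM, ← hc]; ring
  -- ξ of order 2(r+1)
  have hq1 : r ^ 2 - 1 = 4 * c := by omega
  have hdvd_ord : 2 * (r + 1) ∣ r ^ 2 - 1 := by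
    refine ⟨k, ?_⟩; rw [hq1]; subst hk; rw [← hc]; ring
  obtain ⟨g0, hg0⟩ := IsCyclic.exists_ofOrder_eq_natCard (α := Fˣ)
  have hcardu : Nat.card Fˣ = r ^ 2 - 1 := by
    rw [Nat.card_eq_fintype_card, Fintype.card_units, hF]
  rw [hcardu] at hg0
  have hgne : orderOf g0 ≠ 0 := by rw [hg0]; omega
  have hξord : orderOf (g0 ^ (orderOf g0 / (2 * (r + 1)))) = 2 * (r + 1) :=
    orderOf_pow_orderOf_div hgne (by rw [hg0]; exact hdvd_ord)
  set ξu := g0 ^ (orderOf g0 / (2 * (r + 1))) with hξu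
  set ξ : F := (ξu : F) with hξdef
  have hξo : orderOf ξ = 2 * (r + 1) := by rw [orderOf_units]; exact hξord
  have hξ0 : ξ ≠ 0 := Units.ne_zero _
  have hξpow : ∀ s : ℕ, ξ ^ s = 1 ↔ 2 * (r + 1) ∣ s := by
    intro s; rw [← hξo, orderOf_dvd_iff_pow_eq_one]
  have hξq : ξ ^ (2 * M) = 1 := by
    rw [hξpow]; refine ⟨k, ?_⟩; rw [hM]; subst hk; rw [← hc]; ring
  have hξr1 : ξ ^ (r + 1) = -1 := by
    have h2 : ξ ^ (r + 1) * ξ ^ (r + 1) = 1 := by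
      rw [← pow_add]; rw [hξpow]; exact ⟨1, by ring⟩
    rcases mul_self_eq_one_iff.1 h2 with h | h
    · exfalso
      have := (hξpow (r + 1)).1 h
      have := Nat.le_of_dvd (by omega) this
      omega
    · exact h
  -- u
  set u : Fin t → F := fun i => ξ ^ (2 * nn i) with hu
  have hu0 : ∀ i, u i ≠ 0 := fun i => pow_ne_zero _ hξ0
  have huM : ∀ i, u i ^ M = 1 := by
    intro i
    rw [hu]; simp only
    rw [← pow_mul, show 2 * nn i * M = 2 * M * nn i by ring, pow_mul, hξq, one_pow]
  have huinj : Function.Injective u := by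
    intro i j hij
    apply hinj
    have h2 : 2 * nn i = 2 * nn j := by
      have hi := hlt i; have hj := hlt j
      refine pow_injOn_Iio_orderOf ?_ ?_ hij <;>
        · rw [hξo]; simp only [Set.mem_Iio]; omega
    omega
  have hue : ∀ i, u i ^ e = 1 := by
    intro i
    rw [hu]; simp only
    rw [← pow_mul, hξpow]
    obtain ⟨s, hs⟩ := hne i
    exact ⟨s, by rw [mul_assoc, hs]; ring⟩
  -- neg one pow congruence helper
  have hpow2 : ∀ a b : ℕ, a % 2 = b % 2 → (-1 : F) ^ a = (-1 : F) ^ b := by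
    intro a b hab
    conv_lhs => rw [← Nat.div_add_mod a 2]
    conv_rhs => rw [← Nat.div_add_mod b 2]
    rw [pow_add, pow_add, pow_mul, pow_mul, neg_one_sq, one_pow, one_pow, hab]
  -- difference power computation
  have hw : ∀ cc : ℕ, 1 ≤ cc → cc ≤ r → (ξ ^ (2 * cc) - 1) ^ M = (-1 : F) ^ (k + 1 + cc) := by
    intro cc h1 h2
    set w : F := ξ ^ (2 * cc) - 1 with hwdef
    have hw0 : w ≠ 0 := by
      rw [hwdef, sub_ne_zero]
      intro h
      have := Nat.le_of_dvd (by omega) ((hξpow (2 * cc)).1 h)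
      omega
    have hA : ξ ^ (2 * cc) * w ^ r = -w := by
      have hwr : w ^ r = ξ ^ (2 * cc * r) - 1 := by
        rw [hwdef, hr, sub_pow_char_pow, one_pow, ← pow_mul]
      rw [hwr, mul_sub, mul_one, ← pow_add,
        show 2 * cc + 2 * cc * r = (r + 1) * (2 * cc) by ring, pow_mul, hξr1]
      rw [hwdef]
      ring_nf
      rw [show (-1 : F) ^ (cc * 2) = ((-1 : F) ^ 2) ^ cc by rw [← pow_mul, mul_comm], neg_one_sq,
        one_pow]
      ring
    have hB : (-1 : F) ^ cc * w ^ (r * (k + 1)) = (-1) ^ (k + 1) * w ^ (k + 1) := by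
      have h3 := congrArg (· ^ (k + 1)) hA
      simp only [mul_pow, ← pow_mul] at h3
      have hx : ξ ^ (2 * cc * (k + 1)) = (-1 : F) ^ cc := by
        rw [show 2 * cc * (k + 1) = (r + 1) * cc by rw [hk]; ring, pow_mul, hξr1]
      rw [hx] at h3
      rw [h3, neg_pow]
    have hC : w ^ (r * (k + 1)) = (-1 : F) ^ (k + 1 + cc) * w ^ (k + 1) := by
      have := congrArg (fun z => (-1 : F) ^ cc * z) hB
      rw [← mul_assoc, ← pow_add,
        show ((-1 : F) ^ (cc + cc)) = 1 from (Even.neg_one_pow ⟨cc, by ring⟩), one_mul] at this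
      rw [this, ← mul_assoc, ← pow_add]
      congr 2
      omega
    have hD : w ^ M * w ^ (k + 1) = (-1 : F) ^ (k + 1 + cc) * w ^ (k + 1) := by
      rw [← pow_add, show M + (k + 1) = r * (k + 1) by omega, hC]
    exact mul_right_cancel₀ (pow_ne_zero _ hw0) hD
  have hdiffM : ∀ i j, i ≠ j → (u i - u j) ^ M = (-1 : F) ^ (k + 1 + nn i + nn j) := by
    have key : ∀ i j, nn j < nn i → (u i - u j) ^ M = (-1 : F) ^ (k + 1 + nn i + nn j) := by
      intro i j hij
      have hfac : u i - u j = ξ ^ (2 * nn j) * (ξ ^ (2 * (nn i - nn j)) - 1) := by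
        rw [mul_sub, mul_one, ← pow_add, hu]
        simp only
        congr 2
        omega
      have h1 : (ξ ^ (2 * nn j)) ^ M = 1 := by
        rw [← pow_mul, show 2 * nn j * M = 2 * M * nn j by ring, pow_mul, hξq, one_pow]
      rw [hfac, mul_pow, h1, one_mul,
        hw (nn i - nn j) (by omega) (by have := hlt i; omega)]
      apply hpow2
      omega
    intro i j hij
    rcases lt_trichotomy (nn i) (nn j) with h | h | h
    · rw [show u i - u j = -(u j - u i) by ring, hMeven.neg_pow, key j i h]
      apply hpow2; omega
    · exact absurd (hinj h) hij
    · exact key i j h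
  have hfM : ((f : ℕ) : F) ≠ 0 → ((f : ℕ) : F) ^ M = 1 := by
    intro hf0
    have h1 : ((f : ℕ) : F) ^ (r - 1) * ((f : ℕ) : F) = ((f : ℕ) : F) := by
      rw [← pow_succ, show r - 1 + 1 = r by omega, hfrob]
    have h2 : ((f : ℕ) : F) ^ (r - 1) = 1 := mul_right_cancel₀ hf0 (by rw [h1, one_mul])
    rw [show M = (r - 1) * (k + 1) by rw [show r - 1 = 2 * k by omega, hM, ← hc]; ring,
      pow_mul, h2, one_pow]
  -- the polynomial
  set Q : F[X] := ∏ j : Fin t, (X ^ f - C (u j)) with hQdef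
  set P : F[X] := X * Q with hPdef
  have hfne : f ≠ 0 := by omega
  have hmonicQ : Q.Monic := monic_prod_of_monic _ _ fun j _ => monic_X_pow_sub_C _ hfne
  have hmonicP : P.Monic := monic_X.mul hmonicQ
  have hPne : P ≠ 0 := hmonicP.ne_zero
  have hdegQ : Q.natDegree = t * f := by
    rw [hQdef, natDegree_prod _ _ fun j _ => (monic_X_pow_sub_C (u j) hfne).ne_zero]
    simp [natDegree_X_pow_sub_C, mul_comm]
  have hdegP : P.natDegree = t * f + 1 := by
    rw [hPdef, natDegree_mul X_ne_zero hmonicQ.ne_zero, natDegree_X, hdegQ]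
    omega
  have hQdvd : Q ∣ X ^ (r ^ 2 - 1) - 1 := by
    rw [hQdef]
    apply Finset.prod_dvd_of_coprime
    · intro i _ j hj hij
      simp only [Function.onFun]
      have hne' : u j - u i ≠ 0 := sub_ne_zero.2 fun h => hij (huinj h.symm)
      refine ⟨C ((u j - u i)⁻¹), -C ((u j - u i)⁻¹), ?_⟩
      have : C ((u j - u i)⁻¹) * (X ^ f - C (u i)) + -C ((u j - u i)⁻¹) * (X ^ f - C (u j))
          = C ((u j - u i)⁻¹ * (u j - u i)) := by
        rw [map_mul, map_sub]
        ring
      rw [this, inv_mul_cancel₀ hne', map_one]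
    · intro j _
      have h2 : (X : F[X]) ^ (r ^ 2 - 1) - 1 = (X ^ f) ^ e - (C (u j)) ^ e := by
        rw [← pow_mul, ← map_pow, hue, map_one, mul_comm f e, ← hef]
      rw [h2]
      exact sub_dvd_pow_sub_pow _ _ e
  have hcard1 : (1 : ℕ) < Fintype.card F := Fintype.one_lt_card
  have hPdvd : P ∣ X ^ Fintype.card F - X := by
    rw [hF]
    have hsplit : (X : F[X]) ^ r ^ 2 - X = X * (X ^ (r ^ 2 - 1) - 1) := by
      rw [mul_sub, mul_one, ← pow_succ']
      congr 2
      omega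
    rw [hsplit, hPdef]
    exact mul_dvd_mul_left X hQdvd
  have hXqne : (X ^ Fintype.card F - X : F[X]) ≠ 0 :=
    FiniteField.X_pow_card_sub_X_ne_zero F hcard1
  have hroots_univ : (X ^ Fintype.card F - X : F[X]).roots = Finset.univ.val :=
    FiniteField.roots_X_pow_card_sub_X F
  have hsplitsXq : Splits (X ^ Fintype.card F - X : F[X]) := by
    rw [splits_iff_card_roots, hroots_univ,
      FiniteField.X_pow_card_sub_X_natDegree_eq F hcard1]
    rfl
  have hPsplits : Splits P :=
    hsplitsXq.of_dvd hXqne hPdvd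
  have hProotscard : P.roots.card = t * f + 1 := by
    rw [splits_iff_card_roots.mp hPsplits, hdegP]
  have hPnodup : P.roots.Nodup :=
    Multiset.nodup_of_le (Polynomial.roots.le_of_dvd hXqne hPdvd)
      (hroots_univ ▸ Finset.univ.nodup)
  set S : Finset F := P.roots.toFinset with hSdef
  have hSval : S.val = P.roots := by
    rw [hSdef, Multiset.toFinset_val, Multiset.dedup_eq_self.2 hPnodup]
  have hScard : S.card = t * f + 1 := by
    rw [Finset.card_def, hSval, hProotscard]
  have hmem : ∀ a : F, a ∈ S ↔ P.eval a = 0 := by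
    intro a
    rw [hSdef, Multiset.mem_toFinset, mem_roots hPne, IsRoot.def]
  have hPfact : P = (P.roots.map fun a => X - C a).prod :=
    hPsplits.eq_prod_roots_of_monic hmonicP
  have hdelta : ∀ a ∈ S, deltaS S a = Polynomial.eval a (derivative P) := by
    intro a ha
    have haroots : a ∈ P.roots := by rw [← hSval]; exact ha
    conv_rhs => rw [hPfact]
    rw [eval_multiset_prod_X_sub_C_derivative haroots]
    rw [deltaS, Finset.prod]
    congr 1
    rw [Finset.erase_val, hSval]
  -- evaluation of the derivative
  have hQeval : ∀ x : F, Q.eval x = ∏ j, (x ^ f - u j) := by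
    intro x; rw [hQdef, eval_prod]; simp
  have hisq : ∀ x : F, x ≠ 0 → x ^ M = 1 → IsSquare x := by
    intro x hx0 hxM
    rw [FiniteField.isSquare_iff (by rw [hrc]; exact hodd) hx0, hMcard]
    exact hxM
  refine ⟨by exact htf.add (by decide), by omega, S, by rw [hScard]; omega, ?_⟩
  intro a ha
  rw [hdelta a ha]
  by_cases ha0 : a = 0
  · subst ha0
    have heval : Polynomial.eval 0 (derivative P) = ∏ j, -u j := by
      rw [hPdef, derivative_mul, derivative_X, one_mul, eval_add, eval_mul, eval_X, zero_mul,
        add_zero, hQeval, zero_pow hfne]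
      simp
    rw [heval]
    apply hisq
    · simp only [neg_ne_zero]
      exact Finset.prod_ne_zero_iff.2 fun j _ => neg_ne_zero.2 (hu0 j)
    · have h1 : (∏ j, -u j : F) = (-1) ^ t * ∏ j, u j := by
        have hstep : (∏ j, -u j : F) = ∏ j : Fin t, (-1) * u j :=
          Finset.prod_congr rfl fun j _ => by ring
        rw [hstep, Finset.prod_mul_distrib, Finset.prod_const, Finset.card_univ,
          Fintype.card_fin]
      rw [h1]
      have h2 : (-(((-1) ^ t : F) * ∏ j, u j)) = (-1) ^ (t + 1) * ∏ j, u j := by ring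
      rw [h2, mul_pow, ← pow_mul, mul_comm (t + 1) M, pow_mul, hMeven.neg_one_pow, one_pow,
        one_mul, ← Finset.prod_pow]
      simp only [huM]
      exact Finset.prod_const_one
  · -- a ≠ 0
    have hPa : Polynomial.eval a P = 0 := (hmem a).1 ha
    have hQa : Q.eval a = 0 := by
      rw [hPdef, eval_mul, eval_X] at hPa
      rcases mul_eq_zero.1 hPa with h | h
      · exact absurd h ha0
      · exact h
    obtain ⟨i, -, hi⟩ : ∃ i ∈ Finset.univ, a ^ f - u i = 0 := by
      rw [hQeval] at hQa
      exact Finset.prod_eq_zero_iff.1 hQa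
    have hiu : a ^ f = u i := sub_eq_zero.1 hi
    set Qi : F[X] := ∏ l ∈ Finset.univ.erase i, (X ^ f - C (u l)) with hQidef
    have hQisplit : Q = (X ^ f - C (u i)) * Qi := by
      rw [hQdef, hQidef, ← Finset.mul_prod_erase _ _ (Finset.mem_univ i)]
    have hPi : P = (X * (X ^ f - C (u i))) * Qi := by rw [hPdef, hQisplit, mul_assoc]
    have hQia : Qi.eval a = ∏ l ∈ Finset.univ.erase i, (u i - u l) := by
      rw [hQidef, eval_prod]
      refine Finset.prod_congr rfl fun l _ => ?_
      rw [eval_sub, eval_pow, eval_X, eval_C, hiu]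
    have hder1 : derivative (X * (X ^ f - C (u i)))
        = (X ^ f - C (u i)) + X * (C ((f : ℕ) : F) * X ^ (f - 1)) := by
      rw [derivative_mul, derivative_X, one_mul, derivative_sub, derivative_C, sub_zero,
        derivative_X_pow]
    have haf : a * (((f : ℕ) : F) * a ^ (f - 1)) = ((f : ℕ) : F) * u i := by
      rw [← hiu, show a * (((f : ℕ) : F) * a ^ (f - 1)) = ((f : ℕ) : F) * (a ^ (f - 1) * a)
        by ring, ← pow_succ]
      congr 2
      omega
    have hevald : Polynomial.eval a (derivative P)
        = ((f : ℕ) : F) * u i * ∏ l ∈ Finset.univ.erase i, (u i - u l) := by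
      rw [hPi, derivative_mul, hder1, eval_add, eval_mul, eval_mul, hQia]
      simp only [eval_add, eval_mul, eval_sub, eval_pow, eval_X, eval_C]
      rw [hiu, sub_self, mul_zero, zero_mul, add_zero, zero_add, haf]
    rw [hevald]
    by_cases hf0 : ((f : ℕ) : F) = 0
    · rw [hf0]
      simp
    · set D := ∏ l ∈ Finset.univ.erase i, (u i - u l) with hDdef
      have hD0 : D ≠ 0 := Finset.prod_ne_zero_iff.2 fun l hl =>
        sub_ne_zero.2 fun h => (Finset.mem_erase.1 hl).1 (huinj h).symm
      have hDM : D ^ M = 1 := by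
        rw [hDdef, ← Finset.prod_pow]
        have hcongr : ∀ l ∈ Finset.univ.erase i, (u i - u l) ^ M
            = (-1 : F) ^ (k + 1 + nn i + nn l) := fun l hl =>
          hdiffM i l fun h => (Finset.mem_erase.1 hl).1 h.symm
        rw [Finset.prod_congr rfl hcongr, Finset.prod_pow_eq_pow_sum]
        apply Even.neg_one_pow
        have hsum : ∑ l ∈ Finset.univ.erase i, (k + 1 + nn i + nn l)
            = (t - 1) * (k + 1 + nn i) + ∑ l ∈ Finset.univ.erase i, nn l := by
          rw [Finset.sum_add_distrib, Finset.sum_const,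
            Finset.card_erase_of_mem (Finset.mem_univ i), Finset.card_univ, Fintype.card_fin,
            smul_eq_mul]
        rw [hsum]
        have hpi := hpar i
        rw [hβ] at hpi
        have hmul : (t - 1) * (k + 1 + nn i) = (t - 1) * (k + 1) + (t - 1) * nn i := by ring
        rw [hmul]
        rw [Nat.even_iff] at hpi ⊢
        omega
      apply hisq
      · simp only [neg_ne_zero]
        exact mul_ne_zero (mul_ne_zero hf0 (hu0 i)) hD0
      · rw [hMeven.neg_pow, mul_pow, mul_pow, hfM hf0, huM, hDM, one_mul, one_mul]

private lemma par_odd_mul (x y : ℕ) (hx : Odd x) : x * y % 2 = y % 2 := by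
  obtain ⟨w, hw⟩ := hx
  subst hw
  have h : (2 * w + 1) * y = 2 * (w * y) + y := by ring
  omega

theorem stmt_11 (p m : ℕ) (hp : p.Prime) (hodd : p ≠ 2) (hm : 0 < m)
    (r : ℕ) (hr : r = p ^ m)
    (F : Type*) [Field F] [Fintype F] [DecidableEq F] (hF : Fintype.card F = r ^ 2)
    (e f t : ℕ) (hef : r ^ 2 - 1 = e * f)
    (htf : Even (t * f)) (ht1 : 1 ≤ t) (ht2 : t ≤ (r + 1) / Nat.gcd (r + 1) f)
    (hcond : (Even f ∧ 4 ∣ (t - 1) * (r + 1)) ∨ Odd f) :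
    SigmaEG F (t * f + 2) := by
  have hp3 : 3 ≤ p := by have := hp.two_le; omega
  have hr3 : 3 ≤ r := by
    rw [hr]; calc 3 ≤ p := hp3
    _ ≤ p ^ m := Nat.le_self_pow (by omega) p
  have hrodd : Odd r := by rw [hr]; exact (hp.odd_of_ne_two hodd).pow
  have hrodd2 : r % 2 = 1 := Nat.odd_iff.1 hrodd
  have hf1 : 1 ≤ f := by
    rcases Nat.eq_zero_or_pos f with h | h
    · exfalso
      rw [h, mul_zero] at hef
      have : r ^ 2 ≥ 9 := by nlinarith
      omega
    · exact h
  set g := Nat.gcd (r + 1) f with hgdef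
  have hgdl : g ∣ r + 1 := Nat.gcd_dvd_left _ _
  have hgdr : g ∣ f := Nat.gcd_dvd_right _ _
  have hgpos : 0 < g := Nat.gcd_pos_of_pos_left _ (by omega)
  set R' := (r + 1) / g with hR'def
  have hgR : g * R' = r + 1 := Nat.mul_div_cancel' hgdl
  set f' := f / g with hf'def
  have hgf : g * f' = f := Nat.mul_div_cancel' hgdr
  have hf'pos : 0 < f' := by
    rcases Nat.eq_zero_or_pos f' with h | h
    · rw [h, mul_zero] at hgf; omega
    · exact h
  have hcop : Nat.Coprime R' f' := Nat.coprime_div_gcd_div_gcd hgpos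
  have hkey : (r - 1) * (r + 1) = e * f := by
    obtain ⟨s, hs⟩ : ∃ s, r = s + 1 := ⟨r - 1, by omega⟩
    have h1 : (s + 1) ^ 2 = s * (s + 2) + 1 := by ring
    rw [← hef, hs]
    have h2 : (s + 1 - 1) * (s + 1 + 1) = s * (s + 2) := by simp
    omega
  have hRe : (r - 1) * R' = e * f' := by
    have h3 : g * ((r - 1) * R') = g * (e * f') := by
      calc g * ((r - 1) * R') = (r - 1) * (g * R') := by ring
      _ = (r - 1) * (r + 1) := by rw [hgR]
      _ = e * f := hkey
      _ = e * (g * f') := by rw [hgf]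
      _ = g * (e * f') := by ring
    exact Nat.eq_of_mul_eq_mul_left hgpos h3
  have hf'd : f' ∣ r - 1 := hcop.symm.dvd_of_dvd_mul_right (hRe ▸ Dvd.intro_left e rfl)
  have hge : (r + 1) ∣ g * e := by
    obtain ⟨s2, hs2⟩ := hf'd
    refine ⟨s2, ?_⟩
    have h4 : g * e * f' = (r + 1) * s2 * f' := by
      calc g * e * f' = g * (e * f') := by ring
      _ = g * ((r - 1) * R') := by rw [hRe]
      _ = (r - 1) * (g * R') := by ring
      _ = (r - 1) * (r + 1) := by rw [hgR]
      _ = f' * s2 * (r + 1) := by rw [← hs2]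
      _ = (r + 1) * s2 * f' := by ring
    exact Nat.eq_of_mul_eq_mul_right hf'pos h4
  -- general facts for any choice of a
  have hbound : ∀ a : Fin t → ℕ, (∀ i, a i < R') → ∀ i, g * a i < r + 1 := by
    intro a ha i
    have h5 : g * (a i + 1) ≤ g * R' := Nat.mul_le_mul_left g (ha i)
    have h6 : g * (a i + 1) = g * a i + g := by ring
    omega
  have hdvd : ∀ a : Fin t → ℕ, ∀ i, (r + 1) ∣ g * a i * e := by
    intro a i
    have : g * a i * e = a i * (g * e) := by ring
    rw [this]
    exact Dvd.dvd.mul_left hge (a i)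
  rcases hcond with ⟨hfe, h4A⟩ | hfo
  · -- case A : f even
    have h2g : 2 ∣ g := Nat.dvd_gcd ⟨(r + 1) / 2, by omega⟩ hfe.two_dvd
    have hgeven : Even g := by rw [Nat.even_iff]; omega
    have hE1 : Even ((t - 1) * ((r + 1) / 2)) := by
      obtain ⟨w, hw⟩ := h4A
      have h5 : 2 * ((t - 1) * ((r + 1) / 2)) = 4 * w := by
        rw [show 2 * ((t - 1) * ((r + 1) / 2)) = (t - 1) * (2 * ((r + 1) / 2)) by ring,
          show 2 * ((r + 1) / 2) = r + 1 by omega, hw]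
      rw [Nat.even_iff]; omega
    refine aux_sigma p m r hp hodd hm hr hF e f t hef hf1 ht1 htf
      (fun i => g * (i : ℕ)) (hbound _ fun i => by have := i.isLt; omega)
      (fun i j h => Fin.ext (by have := hgpos; exact Nat.eq_of_mul_eq_mul_left hgpos h))
      (hdvd _) ?_
    intro i
    refine (hE1.add ((hgeven.mul_right _).mul_left _)).add ?_
    rw [← Finset.mul_sum]
    exact hgeven.mul_right _
  · -- case B : f odd
    have hgodd : Odd g := by
      rcases Nat.even_or_odd g with h | h
      · exfalso; exact (Nat.not_even_iff_odd.2 hfo) (hgf ▸ h.mul_right f')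
      · exact h
    have hteven : Even t := by
      rcases Nat.even_mul.1 htf with h | h
      · exact h
      · exact absurd h (Nat.not_even_iff_odd.2 hfo)
    have hto : t % 2 = 0 := Nat.even_iff.1 hteven
    have hgo : g % 2 = 1 := Nat.odd_iff.1 hgodd
    -- the per-index parity condition holds as soon as Even ((r+1)/2 + ∑ a)
    have hparB : ∀ a : Fin t → ℕ, Even ((r + 1) / 2 + ∑ l, a l) → ∀ i : Fin t,
        Even ((t - 1) * ((r + 1) / 2) + (t - 1) * (g * a i) +
          ∑ l ∈ Finset.univ.erase i, g * a l) := by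
      intro a hEA i
      have hodd_t1 : Odd (t - 1) := Nat.odd_iff.2 (by omega)
      have e1 : (t - 1) * ((r + 1) / 2) % 2 = (r + 1) / 2 % 2 := par_odd_mul _ _ hodd_t1
      have e2 : (t - 1) * (g * a i) % 2 = g * a i % 2 := par_odd_mul _ _ hodd_t1
      have e3 : g * a i % 2 = a i % 2 := par_odd_mul _ _ hgodd
      have e4 : g * (∑ l, a l) % 2 = (∑ l, a l) % 2 := par_odd_mul _ _ hgodd
      have hsplit : g * a i + ∑ l ∈ Finset.univ.erase i, g * a l = g * ∑ l, a l := by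
        calc g * a i + ∑ l ∈ Finset.univ.erase i, g * a l
            = g * (a i + ∑ l ∈ Finset.univ.erase i, a l) := by
              rw [Nat.mul_add, Finset.mul_sum]
        _ = g * ∑ l, a l := by rw [Finset.add_sum_erase _ a (Finset.mem_univ i)]
      have hEA' : ((r + 1) / 2 + ∑ l, a l) % 2 = 0 := Nat.even_iff.1 hEA
      rw [Nat.even_iff]
      omega
    have hA0 : 2 * (∑ i : Fin t, (i : ℕ)) = t * (t - 1) := by
      rw [Fin.sum_univ_eq_sum_range (fun i => i) t, mul_comm]
      exact Finset.sum_range_id_mul_two t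
    by_cases hpar0 : Even ((r + 1) / 2 + ∑ i : Fin t, (i : ℕ))
    · -- no bump needed
      refine aux_sigma p m r hp hodd hm hr hF e f t hef hf1 ht1 htf
        (fun i => g * (i : ℕ)) (hbound _ fun i => by have := i.isLt; omega)
        (fun i j h => Fin.ext (Nat.eq_of_mul_eq_mul_left hgpos h))
        (hdvd _) (hparB _ hpar0)
    · -- bump the last index
      have htltR : t < R' := by
        rcases Nat.lt_or_ge t R' with h | h
        · exact h
        · exfalso
          have htR : t = R' := le_antisymm ht2 h
          apply hpar0
          obtain ⟨τ, hτ⟩ : ∃ τ, t = 2 * τ := ⟨t / 2, by omega⟩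
          have hgt : g * t = 2 * (g * τ) := by rw [hτ]; ring
          have hβ'eq : (r + 1) / 2 = g * τ := by
            have : g * R' = r + 1 := hgR
            rw [← htR] at this
            omega
          have hA0eq : (∑ i : Fin t, (i : ℕ)) = τ * (t - 1) := by
            have : t * (t - 1) = 2 * (τ * (t - 1)) := by rw [hτ]; ring
            omega
          rw [hβ'eq, hA0eq, show g * τ + τ * (t - 1) = τ * (g + (t - 1)) by ring]
          exact (by rw [Nat.even_iff]; omega : Even (g + (t - 1))).mul_left τ
      set a : Fin t → ℕ := fun i => (i : ℕ) + (if (i : ℕ) = t - 1 then 1 else 0) with hadef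
      have haval : ∀ i : Fin t, a i < R' := by
        intro i
        have := i.isLt
        by_cases h1 : (i : ℕ) = t - 1 <;> simp [hadef, h1] <;> omega
      have hainj : Function.Injective a := by
        intro i j hij
        apply Fin.ext
        have hi := i.isLt
        have hj := j.isLt
        by_cases h1 : (i : ℕ) = t - 1 <;> by_cases h2 : (j : ℕ) = t - 1 <;>
          simp [hadef, h1, h2] at hij <;> omega
      have hasum : (∑ l, a l) = (∑ i : Fin t, (i : ℕ)) + 1 := by
        rw [hadef, Finset.sum_add_distrib]
        congr 1
        have hrw : ∀ i : Fin t, (if (i : ℕ) = t - 1 then 1 else 0)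
            = (if i = (⟨t - 1, by omega⟩ : Fin t) then 1 else 0) := by
          intro i
          congr 1
          simp [Fin.ext_iff]
        rw [Finset.sum_congr rfl fun i _ => hrw i, Finset.sum_ite_eq' Finset.univ]
        simp
      have hpar1 : Even ((r + 1) / 2 + ∑ l, a l) := by
        rw [hasum]
        rw [Nat.even_iff] at hpar0 ⊢
        omega
      exact aux_sigma p m r hp hodd hm hr hF e f t hef hf1 ht1 htf
        (fun i => g * a i) (hbound _ haval)
        (fun i j h => hainj (Nat.eq_of_mul_eq_mul_left hgpos h))
        (hdvd _) (hparB _ hpar1)
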